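/- Let C ⊆ ℝⁿ be a β-strongly convex set (β > 0), let x ∈ C, and let μ ∈ ℝⁿ be a unit vector such that ⟨μ, y − x⟩ ≥ 0 for all y ∈ C. Then ⟨μ, y − x⟩ ≥ β·‖y − x‖² for all y ∈ C, and consequently C is contained in the closed Euclidean ball of center x + μ/(2β) and radius 1/(2β). -/

import Mathlib

/-- A set `C` is `β`-strongly convex if for all `x, y ∈ C` and `λ ∈ [0,1]`, the
closed ball of center `λx + (1−λ)y` and radius `β λ(1−λ) ‖x−y‖²` is contained in `C`. -/
def StronglyConvexSet {n : ℕ} (β : ℝ) (C : Set (EuclideanSpace ℝ (Fin n))) : Prop :=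
  ∀ x ∈ C, ∀ y ∈ C, ∀ l ∈ Set.Icc (0 : ℝ) 1,
    Metric.closedBall (l • x + (1 - l) • y) (β * (l * (1 - l)) * ‖x - y‖ ^ 2) ⊆ C

/-- Quadratic support and outer tangent ball from strong convexity: if `C` is
`β`-strongly convex, `x ∈ C`, and `μ` is a unit vector with `⟨μ, y − x⟩ ≥ 0` on `C`,
then `⟨μ, y − x⟩ ≥ β ‖y − x‖²` on `C`, and `C` is contained in the closed ball of
center `x + μ/(2β)` and radius `1/(2β)`. -/
theorem strongly_convex_quadratic_support {n : ℕ} (β : ℝ) (hβ : 0 < β)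
    (C : Set (EuclideanSpace ℝ (Fin n))) (hC : StronglyConvexSet β C)
    (x : EuclideanSpace ℝ (Fin n)) (hx : x ∈ C)
    (μ : EuclideanSpace ℝ (Fin n)) (hμ : ‖μ‖ = 1)
    (hsupp : ∀ y ∈ C, 0 ≤ (inner ℝ μ (y - x) : ℝ)) :
    (∀ y ∈ C, β * ‖y - x‖ ^ 2 ≤ (inner ℝ μ (y - x) : ℝ)) ∧
      C ⊆ Metric.closedBall (x + (1 / (2 * β)) • μ) (1 / (2 * β)) := by
  have key : ∀ y ∈ C, β * ‖y - x‖ ^ 2 ≤ (inner ℝ μ (y - x) : ℝ) := by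
    intro y hy
    set q : ℝ := ‖y - x‖ ^ 2 with hq
    have hq0 : 0 ≤ q := sq_nonneg _
    have hI0 : 0 ≤ (inner ℝ μ (y - x) : ℝ) := hsupp y hy
    have step : ∀ l ∈ Set.Ico (0:ℝ) 1, β * l * q ≤ (inner ℝ μ (y - x) : ℝ) := by
      intro l hl
      obtain ⟨hl0, hl1⟩ := hl
      set r : ℝ := β * (l * (1 - l)) * ‖x - y‖ ^ 2 with hr
      have hr0 : 0 ≤ r := by
        apply mul_nonneg (mul_nonneg hβ.le (mul_nonneg hl0 (by linarith))) (sq_nonneg _)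
      have hz : (l • x + (1 - l) • y) - r • μ ∈ C := by
        apply hC x hx y hy l ⟨hl0, hl1.le⟩
        simp [Metric.mem_closedBall, dist_eq_norm, norm_smul, hμ, abs_of_nonneg hr0]
        exact hr.le
      have h0 := hsupp _ hz
      have hdecomp : ((l • x + (1 - l) • y) - r • μ) - x = (1 - l) • (y - x) - r • μ := by
        module
      rw [hdecomp, inner_sub_right, real_inner_smul_right, real_inner_smul_right,
        real_inner_self_eq_norm_sq, hμ] at h0
      have hxy : ‖x - y‖ = ‖y - x‖ := norm_sub_rev x y
      rw [hr, hxy, ← hq] at h0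
      have h1l : 0 < 1 - l := by linarith
      have h2 : (1 - l) * (β * l * q) ≤ (1 - l) * (inner ℝ μ (y - x) : ℝ) := by
        nlinarith [h0]
      exact le_of_mul_le_mul_left h2 h1l
    rcases eq_or_lt_of_le hq0 with h | hqpos
    · rw [← h]; simpa using hI0
    · by_contra hcon
      push_neg at hcon
      have hb : 0 < β * q := mul_pos hβ hqpos
      have hdn : 0 ≤ (inner ℝ μ (y - x) : ℝ) / (β * q) := div_nonneg hI0 hb.le
      have hdl : (inner ℝ μ (y - x) : ℝ) / (β * q) < 1 := (div_lt_one hb).mpr hcon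
      have hl : ((inner ℝ μ (y - x) : ℝ) / (β * q) + 1) / 2 ∈ Set.Ico (0:ℝ) 1 :=
        ⟨by linarith, by linarith⟩
      have hs := step _ hl
      have heq : β * (((inner ℝ μ (y - x) : ℝ) / (β * q) + 1) / 2) * q
          = ((inner ℝ μ (y - x) : ℝ) + β * q) / 2 := by
        field_simp
      rw [heq] at hs
      linarith
  refine ⟨key, fun y hy => ?_⟩
  have hk := key y hy
  rw [Metric.mem_closedBall, dist_eq_norm]
  have hb : (0:ℝ) < 1 / (2 * β) := by positivity
  have hdecomp : y - (x + (1 / (2 * β)) • μ) = (y - x) - (1 / (2 * β)) • μ := by module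
  rw [hdecomp]
  have hsq : ‖(y - x) - (1 / (2 * β)) • μ‖ ^ 2 ≤ (1 / (2 * β)) ^ 2 := by
    rw [norm_sub_sq_real, real_inner_smul_right, norm_smul, hμ, real_inner_comm]
    rw [Real.norm_eq_abs, abs_of_nonneg hb.le]
    have : 2 * (1 / (2 * β) * (inner ℝ μ (y - x) : ℝ)) = (inner ℝ μ (y - x) : ℝ) / β := by
      field_simp
    rw [this]
    have h2 : ‖y - x‖ ^ 2 ≤ (inner ℝ μ (y - x) : ℝ) / β := by
      rw [le_div_iff₀ hβ]; nlinarith [hk]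
    nlinarith [h2]
  nlinarith [norm_nonneg ((y - x) - (1 / (2 * β)) • μ), hsq, hb]
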